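/- Let (a_n) be a monotonically nondecreasing, strictly positive real sequence and (b_n) any real sequence. Then for any M ∈ ℕ, max_{1 ≤ k ≤ M} |∑_{i=1}^k b_i| / a_k ≤ 2 · max_{1 ≤ k ≤ M} |∑_{i=1}^k b_i / a_i|. -/

import Mathlib

open Finset

theorem maximal_weighted_sum_inequality
    (a b : ℕ → ℝ) (ha : ∀ n, 0 < a n) (hmono : Monotone a)
    (M : ℕ) (hM : 1 ≤ M) :
    (Finset.Icc 1 M).sup' (Finset.nonempty_Icc.mpr hM)
        (fun k => |∑ i ∈ Finset.Icc 1 k, b i| / a k)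
      ≤ 2 * (Finset.Icc 1 M).sup' (Finset.nonempty_Icc.mpr hM)
        (fun k => |∑ i ∈ Finset.Icc 1 k, b i / a i|) := by
  set S : ℕ → ℝ := fun k => ∑ i ∈ Finset.Icc 1 k, b i with hS
  set T : ℕ → ℝ := fun k => ∑ i ∈ Finset.Icc 1 k, b i / a i with hT
  set B := (Finset.Icc 1 M).sup' (Finset.nonempty_Icc.mpr hM) (fun k => |T k|) with hB
  have hTB : ∀ k, 1 ≤ k → k ≤ M → |T k| ≤ B := fun k h1 h2 =>
    Finset.le_sup' (fun k => |T k|) (Finset.mem_Icc.mpr ⟨h1, h2⟩)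
  have hB0 : 0 ≤ B := le_trans (abs_nonneg _) (hTB 1 le_rfl hM)
  have key : ∀ k, 1 ≤ k → k ≤ M → |S k - a k * T k| ≤ (a k - a 1) * B := by
    intro k h1
    induction k, h1 using Nat.le_induction with
    | base =>
      intro _
      have : S 1 - a 1 * T 1 = 0 := by
        simp only [hS, hT, Finset.Icc_self, Finset.sum_singleton]
        field_simp [(ha 1).ne']
        ring
      rw [this]
      simp
    | succ k hk ih =>
      intro h2
      have hkM : k ≤ M := by omega
      have hSk : S (k + 1) = S k + b (k + 1) := by
        simp [hS, Finset.sum_Icc_succ_top (by omega : 1 ≤ k + 1)]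
      have hTk : T (k + 1) = T k + b (k + 1) / a (k + 1) := by
        simp [hT, Finset.sum_Icc_succ_top (by omega : 1 ≤ k + 1)]
      have heq : S (k + 1) - a (k + 1) * T (k + 1)
          = (S k - a k * T k) + (a k - a (k + 1)) * T k := by
        rw [hSk, hTk]
        field_simp [(ha (k + 1)).ne']
        ring
      rw [heq]
      calc |(S k - a k * T k) + (a k - a (k + 1)) * T k|
          ≤ |S k - a k * T k| + |(a k - a (k + 1)) * T k| := abs_add_le _ _
        _ ≤ (a k - a 1) * B + (a (k + 1) - a k) * B := by
            gcongr
            · exact ih hkM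
            · rw [abs_mul]
              have h1 : |a k - a (k + 1)| = a (k + 1) - a k := by
                rw [abs_sub_comm, abs_of_nonneg (by linarith [hmono (Nat.le_succ k)])]
              rw [h1]
              gcongr
              · linarith [hmono (Nat.le_succ k)]
              · exact hTB k hk hkM
        _ = (a (k + 1) - a 1) * B := by ring
  apply Finset.sup'_le
  intro k hk
  obtain ⟨h1, h2⟩ := Finset.mem_Icc.mp hk
  rw [div_le_iff₀ (ha k)]
  calc |S k| ≤ |S k - a k * T k| + |a k * T k| := by
        have := abs_add_le (S k - a k * T k) (a k * T k); simpa using this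
    _ ≤ (a k - a 1) * B + a k * B := by
        apply add_le_add (key k h1 h2)
        rw [abs_mul, abs_of_pos (ha k)]
        exact mul_le_mul_of_nonneg_left (hTB k h1 h2) (ha k).le
    _ ≤ 2 * B * a k := by nlinarith [ha 1, ha k, hB0]
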